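/- arXiv:math/0610913 — 4 statements merged into one kernel-verified Lean document; each statement's English description precedes it below -/
import Mathlib

section
/- For every odd integer p ≥ 9 there exists a Laurent polynomial Q_p(q,t) ∈ ℤ[q^{±1}, t^{±1}] with nonnegative coefficients such that Kh_p(q,t) = q·(1 + q²) + (1 + t q⁴) · Q_p(q,t). -/
open Finset

/-- Laurent polynomials in two variables `t, q` over `ℤ`:
the index `(i, j)` records the monomial `t^i q^j`. -/
abbrev LP := AddMonoidAlgebra ℤ (ℤ × ℤ)

/-- The monomial `c · t^i q^j`. -/
noncomputable def mono (i j c : ℤ) : LP := AddMonoidAlgebra.single (i, j) c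

/-- The Khovanov Poincaré polynomial `Kh_p(q,t)` of `P(p, -(p-2), 0)` (formula (000)). -/
noncomputable def Kh (p : ℤ) : LP :=
  mono (2 - p) (5 - 2*p) 1 + mono (3 - p) (9 - 2*p) 1 + mono (4 - p) (9 - 2*p) 2
    + mono (5 - p) (11 - 2*p) 1
  + ∑ n ∈ (Finset.Icc (7 - p) (-2)).filter (fun n => Even n),
      (mono (n - 2) (2*n - 1) ((p + n - 5)/2 + 1) + mono (n - 1) (2*n - 1) ((p + n - 5)/2 + 2)
        + mono (n - 1) (2*n + 1) ((p + n - 5)/2) + mono n (2*n + 1) ((p + n - 5)/2 + 1))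
  + (mono (-2) (-1) ((p - 9)/2 + 3) + mono (-1) (-1) ((p - 9)/2 + 3)
      + mono (-1) 1 ((p - 9)/2 + 2) + mono 0 1 ((p - 9)/2 + 4))
  + (mono 0 3 ((p - 9)/2 + 4) + mono 1 3 ((p - 9)/2 + 3)
      + mono 1 5 ((p - 9)/2 + 3) + mono 2 5 ((p - 9)/2 + 4))
  + ∑ m ∈ (Finset.Icc 2 (p - 3)).filter (fun m => Even m),
      (mono m (2*m + 3) ((p - m - 3)/2 + 1) + mono (m + 1) (2*m + 3) ((p - m - 3)/2)
        + mono (m + 1) (2*m + 5) ((p - m - 3)/2 + 2) + mono (m + 2) (2*m + 5) ((p - m - 3)/2 + 1))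
  + mono p (2*p + 3) 1

/-- The Khovanov Poincaré polynomial `Torus_p(q,t)` of the torus knot `T(2,p)`. -/
noncomputable def Torus (p : ℤ) : LP :=
  mono 0 (p - 2) 1 + mono 0 p 1
    + ∑ k ∈ Finset.Icc 1 ((p - 1)/2),
        (mono (2*k) (p + 4*k - 2) 1 + mono (2*k + 1) (p + 4*k + 2) 1)

/-- The Khovanov Poincaré polynomial `Kh_{p,r}(q,t)` of `P(p, -(p-2), -r)` (formula (002)). -/
noncomputable def KhR (p r : ℤ) : LP :=
  mono r (2*r) 1 * Kh p + mono 0 1 1 + mono 0 3 1 + mono 1 3 1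
    + ∑ k ∈ Finset.Icc 1 (r/2 - 1),
        (mono (2*k) (4*k + 1) 1 + mono (2*k) (4*k + 3) 1
          + mono (2*k + 1) (4*k + 3) 1 + mono (2*k + 1) (4*k + 5) 1)
    + mono (r + 1) (2*r + 5) 1

/-- Evaluation at `q = 1, t = 1`: the sum of all coefficients. -/
noncomputable def evalOneOne (f : LP) : ℤ := f.coeff.sum fun _ c => c

/-- Evaluation at `q = 1, t = -1`. -/
noncomputable def evalOneNegOne (f : LP) : ℤ := f.coeff.sum fun ij c => c * (ij.1.negOnePow : ℤ)

/-- Substitution `t = -1`, yielding a Laurent polynomial in `q`. -/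
noncomputable def evalTNegOne (f : LP) : LaurentPolynomial ℤ :=
  f.coeff.sum fun ij c => LaurentPolynomial.C (c * (ij.1.negOnePow : ℤ)) * LaurentPolynomial.T ij.2

/-- Substitution `q ↦ q⁻¹, t = -1`, yielding a Laurent polynomial in `q`. -/
noncomputable def evalQInvTNegOne (f : LP) : LaurentPolynomial ℤ :=
  f.coeff.sum fun ij c => LaurentPolynomial.C (c * (ij.1.negOnePow : ℤ)) * LaurentPolynomial.T (-ij.2)

/-- Substitution `(q, t) ↦ (q⁻¹, t⁻¹)` on two-variable Laurent polynomials. -/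
noncomputable def inv2 (f : LP) : LP := AddMonoidAlgebra.ofCoeff (Finsupp.mapDomain (fun ij => -ij) f.coeff)

lemma mono_congr {i j c i' j' c' : ℤ} (h1 : i = i') (h2 : j = j') (h3 : c = c') :
    mono i j c = mono i' j' c' := by subst h1; subst h2; subst h3; rfl

lemma mono_zero' (i j : ℤ) : mono i j 0 = 0 := by
  unfold mono; exact AddMonoidAlgebra.single_zero _

lemma mono_split {i j c a b : ℤ} (h : c = a + b) : mono i j c = mono i j a + mono i j b := by
  subst h; unfold mono
  show AddMonoidAlgebra.single (i,j) (a+b) = AddMonoidAlgebra.single (i,j) a + AddMonoidAlgebra.single (i,j) b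
  exact AddMonoidAlgebra.single_add _ _ _

lemma shift_mono (i j c : ℤ) : mono 1 4 1 * mono i j c = mono (i+1) (j+4) c := by
  unfold mono
  rw [AddMonoidAlgebra.single_mul_single]
  show AddMonoidAlgebra.single _ _ = AddMonoidAlgebra.single _ _
  rw [Prod.mk_add_mk, one_mul]
  norm_num [add_comm]

lemma LP.add_apply (f g : LP) (ij : ℤ × ℤ) : (f + g).coeff ij = f.coeff ij + g.coeff ij := rfl

lemma LP.sum_apply (s : Finset ℤ) (f : ℤ → LP) (ij : ℤ × ℤ) :
    (∑ n ∈ s, f n).coeff ij = ∑ n ∈ s, (f n).coeff ij := by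
  rw [AddMonoidAlgebra.coeff_sum]; exact Finsupp.finset_sum_apply s _ ij

lemma mono_nonneg {i j c : ℤ} (hc : 0 ≤ c) (ij : ℤ × ℤ) : 0 ≤ (mono i j c).coeff ij := by
  unfold mono
  show (0:ℤ) ≤ Finsupp.single _ _ ij
  rw [Finsupp.single_apply]
  split <;> simp [hc]

lemma tele (a b : ℤ) (ha : a % 2 = 0) (hb : b % 2 = 0) (hab : a ≤ b) (f : ℤ → LP) :
    ∑ n ∈ (Icc a b).filter (fun n => Even n), f (n+2)
      = ∑ n ∈ (Icc a b).filter (fun n => Even n), f n - f a + f (b+2) := by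
  have himg : ((Icc a b).filter (fun n => Even n)).image (· + 2)
      = (Icc (a+2) (b+2)).filter (fun n => Even n) := by
    ext m
    simp only [Finset.mem_image, Finset.mem_filter, Finset.mem_Icc, Int.even_iff]
    constructor
    · rintro ⟨n, ⟨⟨h1, h2⟩, h3⟩, rfl⟩; omega
    · rintro ⟨⟨h1, h2⟩, h3⟩; exact ⟨m - 2, ⟨⟨by omega, by omega⟩, by omega⟩, by ring⟩
  have h1 : (Icc a (b+2)).filter (fun n => Even n)
      = insert a ((Icc (a+2) (b+2)).filter (fun n => Even n)) := by
    ext n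
    simp only [Finset.mem_insert, Finset.mem_filter, Finset.mem_Icc, Int.even_iff]
    omega
  have h2 : (Icc a (b+2)).filter (fun n => Even n)
      = insert (b+2) ((Icc a b).filter (fun n => Even n)) := by
    ext n
    simp only [Finset.mem_insert, Finset.mem_filter, Finset.mem_Icc, Int.even_iff]
    omega
  have hna : a ∉ (Icc (a+2) (b+2)).filter (fun n => Even n) := by
    simp only [Finset.mem_filter, Finset.mem_Icc]; omega
  have hnb : (b+2) ∉ (Icc a b).filter (fun n => Even n) := by
    simp only [Finset.mem_filter, Finset.mem_Icc]; omega
  have e1 : ∑ n ∈ (Icc a b).filter (fun n => Even n), f (n+2)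
      = ∑ n ∈ (Icc (a+2) (b+2)).filter (fun n => Even n), f n := by
    rw [← himg]
    exact (Finset.sum_image (by intro x _ y _ h; have h' : x + 2 = y + 2 := h; omega)).symm
  rw [e1]
  have := (Finset.sum_insert hna).symm.trans ((congrArg (∑ n ∈ ·, f n) h1).symm.trans
    ((congrArg (∑ n ∈ ·, f n) h2).trans (Finset.sum_insert hnb)))
  linear_combination (norm := abel) this

/-- For odd `p ≥ 9` there is `Q_p ∈ ℤ[q^{±1}, t^{±1}]` with nonnegative coefficients such
that `Kh_p(q,t) = q·(1 + q²) + (1 + t q⁴) · Q_p(q,t)`. -/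
theorem stmt_7 (p : ℤ) (hp : Odd p) (hp9 : 9 ≤ p) :
    ∃ Q : LP, (∀ ij : ℤ × ℤ, 0 ≤ Q.coeff ij) ∧
      Kh p = mono 0 1 1 + mono 0 3 1 + (1 + mono 1 4 1) * Q := by
  have hpm : p % 2 = 1 := Int.odd_iff.mp hp
  refine ⟨mono (2-p) (5-2*p) 1 + mono (4-p) (9-2*p) 2 + mono (5-p) (11-2*p) 1
    + ∑ n ∈ (Finset.Icc (7-p) (-2)).filter (fun n => Even n),
        (mono (n-1) (2*n-1) ((p+n-5)/2+2) + mono n (2*n+1) ((p+n-5)/2+1))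
    + mono (-1) (-1) ((p-9)/2+3) + mono 0 1 ((p-9)/2+3) + mono 1 3 ((p-9)/2+3)
    + mono 2 5 ((p-9)/2+4)
    + ∑ m ∈ (Finset.Icc 2 (p-3)).filter (fun m => Even m),
        (mono (m+1) (2*m+3) ((p-m-3)/2) + mono (m+2) (2*m+5) ((p-m-3)/2+1)), ?_, ?_⟩
  · -- nonnegativity
    intro ij
    simp only [LP.add_apply, LP.sum_apply]
    have hS : ∀ n ∈ (Finset.Icc (7-p) (-2)).filter (fun n => Even n),
        (0:ℤ) ≤ (mono (n-1) (2*n-1) ((p+n-5)/2+2) + mono n (2*n+1) ((p+n-5)/2+1)).coeff ij := by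
      intro n hn
      simp only [Finset.mem_filter, Finset.mem_Icc] at hn
      rw [LP.add_apply]
      exact add_nonneg (mono_nonneg (by omega) ij) (mono_nonneg (by omega) ij)
    have hM : ∀ m ∈ (Finset.Icc 2 (p-3)).filter (fun m => Even m),
        (0:ℤ) ≤ (mono (m+1) (2*m+3) ((p-m-3)/2) + mono (m+2) (2*m+5) ((p-m-3)/2+1)).coeff ij := by
      intro m hm
      simp only [Finset.mem_filter, Finset.mem_Icc] at hm
      rw [LP.add_apply]
      exact add_nonneg (mono_nonneg (by omega) ij) (mono_nonneg (by omega) ij)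
    refine add_nonneg (add_nonneg (add_nonneg (add_nonneg (add_nonneg (add_nonneg
      (add_nonneg (add_nonneg (mono_nonneg (by omega) ij) (mono_nonneg (by omega) ij))
        (mono_nonneg (by omega) ij)) (Finset.sum_nonneg hS)) (mono_nonneg (by omega) ij))
      (mono_nonneg (by omega) ij)) (mono_nonneg (by omega) ij)) (mono_nonneg (by omega) ij))
      (Finset.sum_nonneg hM)
  · rw [one_add_mul]
    simp only [mul_add, Finset.mul_sum, shift_mono]
    unfold Kh
    -- telescoping for the n-sum
    have keyS : ∑ x ∈ (Finset.Icc (7-p) (-2)).filter (fun n => Even n),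
          (mono (x-1+1) (2*x-1+4) ((p+x-5)/2+2) + mono (x+1) (2*x+1+4) ((p+x-5)/2+1))
        = ∑ n ∈ (Finset.Icc (7-p) (-2)).filter (fun n => Even n),
            (mono (n-2) (2*n-1) ((p+n-5)/2+1) + mono (n-1) (2*n+1) ((p+n-5)/2))
          - (mono (5-p) (13-2*p) 2 + mono (6-p) (15-2*p) 1)
          + (mono (-2) (-1) ((p-9)/2+3) + mono (-1) 1 ((p-9)/2+2)) := by
      have t := tele (7-p) (-2) (by omega) (by omega) (by omega)
        (fun n => mono (n-2) (2*n-1) ((p+n-5)/2+1) + mono (n-1) (2*n+1) ((p+n-5)/2))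
      rw [Finset.sum_congr rfl (fun n _ => by
        refine congrArg₂ (· + ·) (mono_congr ?_ ?_ ?_) (mono_congr ?_ ?_ ?_) <;> omega
        : ∀ x ∈ _, _ = (fun n => mono (n-2) (2*n-1) ((p+n-5)/2+1)
            + mono (n-1) (2*n+1) ((p+n-5)/2)) (x+2)), t]
      congr 1
      · congr 1
        exact congrArg₂ (· + ·) (mono_congr (by ring) (by ring) (by omega))
          (mono_congr (by ring) (by ring) (by omega))
      · exact congrArg₂ (· + ·) (mono_congr (by ring) (by ring) (by omega))
          (mono_congr (by ring) (by ring) (by omega))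
    -- telescoping for the m-sum
    have keyM : ∑ x ∈ (Finset.Icc 2 (p-3)).filter (fun m => Even m),
          (mono (x+1+1) (2*x+3+4) ((p-x-3)/2) + mono (x+2+1) (2*x+5+4) ((p-x-3)/2+1))
        = ∑ m ∈ (Finset.Icc 2 (p-3)).filter (fun m => Even m),
            (mono m (2*m+3) ((p-m-3)/2+1) + mono (m+1) (2*m+5) ((p-m-3)/2+2))
          - (mono 2 7 ((p-9)/2+3) + mono 3 9 ((p-9)/2+4))
          + mono p (2*p+3) 1 := by
      have t := tele 2 (p-3) (by omega) (by omega) (by omega)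
        (fun m => mono m (2*m+3) ((p-m-3)/2+1) + mono (m+1) (2*m+5) ((p-m-3)/2+2))
      rw [Finset.sum_congr rfl (fun m _ => by
        refine congrArg₂ (· + ·) (mono_congr ?_ ?_ ?_) (mono_congr ?_ ?_ ?_) <;> omega
        : ∀ x ∈ _, _ = (fun m => mono m (2*m+3) ((p-m-3)/2+1)
            + mono (m+1) (2*m+5) ((p-m-3)/2+2)) (x+2)), t]
      congr 1
      · congr 1
        exact congrArg₂ (· + ·) (mono_congr rfl rfl (by omega))
          (mono_congr rfl rfl (by omega))
      · rw [show ((p-(p-3+2)-3)/2+1 : ℤ) = 0 from by omega, mono_zero', zero_add]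
        exact mono_congr (by ring) (by ring) (by omega)
    rw [keyS, keyM]
    -- split the Kh sums
    rw [show ∑ n ∈ (Finset.Icc (7-p) (-2)).filter (fun n => Even n),
          (mono (n - 2) (2*n - 1) ((p + n - 5)/2 + 1) + mono (n - 1) (2*n - 1) ((p + n - 5)/2 + 2)
            + mono (n - 1) (2*n + 1) ((p + n - 5)/2) + mono n (2*n + 1) ((p + n - 5)/2 + 1))
        = ∑ n ∈ (Finset.Icc (7-p) (-2)).filter (fun n => Even n),
            (mono (n-2) (2*n-1) ((p+n-5)/2+1) + mono (n-1) (2*n+1) ((p+n-5)/2))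
          + ∑ n ∈ (Finset.Icc (7-p) (-2)).filter (fun n => Even n),
            (mono (n-1) (2*n-1) ((p+n-5)/2+2) + mono n (2*n+1) ((p+n-5)/2+1)) from by
      rw [← Finset.sum_add_distrib]; exact Finset.sum_congr rfl (fun n _ => by abel)]
    rw [show ∑ m ∈ (Finset.Icc 2 (p-3)).filter (fun m => Even m),
          (mono m (2*m + 3) ((p - m - 3)/2 + 1) + mono (m + 1) (2*m + 3) ((p - m - 3)/2)
            + mono (m + 1) (2*m + 5) ((p - m - 3)/2 + 2) + mono (m + 2) (2*m + 5) ((p - m - 3)/2 + 1))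
        = ∑ m ∈ (Finset.Icc 2 (p-3)).filter (fun m => Even m),
            (mono m (2*m+3) ((p-m-3)/2+1) + mono (m+1) (2*m+5) ((p-m-3)/2+2))
          + ∑ m ∈ (Finset.Icc 2 (p-3)).filter (fun m => Even m),
            (mono (m+1) (2*m+3) ((p-m-3)/2) + mono (m+2) (2*m+5) ((p-m-3)/2+1)) from by
      rw [← Finset.sum_add_distrib]; exact Finset.sum_congr rfl (fun m _ => by abel)]
    -- normalize shifted standalone monomials
    rw [show mono (2-p+1) (5-2*p+4) 1 = mono (3-p) (9-2*p) 1 from mono_congr (by ring) (by ring) rfl,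
        show mono (4-p+1) (9-2*p+4) 2 = mono (5-p) (13-2*p) 2 from mono_congr (by ring) (by ring) rfl,
        show mono (5-p+1) (11-2*p+4) 1 = mono (6-p) (15-2*p) 1 from mono_congr (by ring) (by ring) rfl,
        show mono (-1+1) (-1+4) ((p-9)/2+3) = mono 0 3 ((p-9)/2+3) from mono_congr (by ring) (by ring) rfl,
        show mono (0+1) (1+4) ((p-9)/2+3) = mono 1 5 ((p-9)/2+3) from mono_congr (by ring) (by ring) rfl,
        show mono (1+1) (3+4) ((p-9)/2+3) = mono 2 7 ((p-9)/2+3) from mono_congr (by ring) (by ring) rfl,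
        show mono (2+1) (5+4) ((p-9)/2+4) = mono 3 9 ((p-9)/2+4) from mono_congr (by ring) (by ring) rfl]
    -- split the two exceptional coefficients
    rw [show mono 0 1 ((p-9)/2+4) = mono 0 1 1 + mono 0 1 ((p-9)/2+3) from mono_split (by omega),
        show mono 0 3 ((p-9)/2+4) = mono 0 3 1 + mono 0 3 ((p-9)/2+3) from mono_split (by omega)]
    abel
end

section
/- For every odd integer p ≥ 9, write c(i,j) for the coefficient of q^j t^i in Kh_p. Then c(i, 2i+1) = c(i+1, 2i+5) for every integer i ∉ {-1, 0}; moreover c(0,1) - 1 = c(1,5) and c(-1,-1) = c(0,3) - 1. -/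
open Finset

lemma LP_add_apply (f g : LP) (k : ℤ × ℤ) : (f + g).coeff k = f.coeff k + g.coeff k := rfl

lemma LP_single_apply (a : ℤ × ℤ) (b : ℤ) (k : ℤ × ℤ) :
    (AddMonoidAlgebra.single a b : LP).coeff k = if a = k then b else 0 := Finsupp.single_apply

lemma sum_single_apply (s : Finset ℤ) (F : ℤ → ℤ × ℤ) (c : ℤ → ℤ) (k : ℤ × ℤ) :
    (∑ n ∈ s, (AddMonoidAlgebra.single (F n) (c n) : LP)).coeff k
      = ∑ n ∈ s, if F n = k then c n else 0 := by
  rw [AddMonoidAlgebra.coeff_sum, Finset.sum_apply']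
  exact Finset.sum_congr rfl fun n _ => Finsupp.single_apply

lemma collapse (A B v : ℤ) (P : Prop) [Decidable P] (F : ℤ → ℤ × ℤ) (c : ℤ → ℤ) (k : ℤ × ℤ)
    (hv : ∀ n, F n = k ↔ (n = v ∧ P)) :
    (∑ n ∈ (Finset.Icc A B).filter (fun n => Even n),
        (AddMonoidAlgebra.single (F n) (c n) : LP)).coeff k
      = if v % 2 = 0 ∧ A ≤ v ∧ v ≤ B ∧ P then c v else 0 := by
  rw [sum_single_apply]
  simp only [hv]
  by_cases hP : P
  · simp only [hP, and_true]
    rw [Finset.sum_ite_eq' ((Finset.Icc A B).filter (fun n => Even n)) v c]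
    have hmem : (v ∈ (Finset.Icc A B).filter fun n => Even n) ↔ (v % 2 = 0 ∧ A ≤ v ∧ v ≤ B) := by
      simp only [Finset.mem_filter, Finset.mem_Icc, Int.even_iff]
      tauto
    simp only [hmem]
  · simp [hP]

lemma Kh_apply (p i j : ℤ) : (Kh p).coeff (i, j) =
    (if 2 - p = i ∧ 5 - 2*p = j then 1 else 0)
  + (if 3 - p = i ∧ 9 - 2*p = j then 1 else 0)
  + (if 4 - p = i ∧ 9 - 2*p = j then 2 else 0)
  + (if 5 - p = i ∧ 11 - 2*p = j then 1 else 0)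
  + (if (i+2) % 2 = 0 ∧ 7 - p ≤ i+2 ∧ i+2 ≤ -2 ∧ j = 2*i+3 then (p + (i+2) - 5)/2 + 1 else 0)
  + (if (i+1) % 2 = 0 ∧ 7 - p ≤ i+1 ∧ i+1 ≤ -2 ∧ j = 2*i+1 then (p + (i+1) - 5)/2 + 2 else 0)
  + (if (i+1) % 2 = 0 ∧ 7 - p ≤ i+1 ∧ i+1 ≤ -2 ∧ j = 2*i+3 then (p + (i+1) - 5)/2 else 0)
  + (if i % 2 = 0 ∧ 7 - p ≤ i ∧ i ≤ -2 ∧ j = 2*i+1 then (p + i - 5)/2 + 1 else 0)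
  + (if -2 = i ∧ -1 = j then (p - 9)/2 + 3 else 0)
  + (if -1 = i ∧ -1 = j then (p - 9)/2 + 3 else 0)
  + (if -1 = i ∧ 1 = j then (p - 9)/2 + 2 else 0)
  + (if 0 = i ∧ 1 = j then (p - 9)/2 + 4 else 0)
  + (if 0 = i ∧ 3 = j then (p - 9)/2 + 4 else 0)
  + (if 1 = i ∧ 3 = j then (p - 9)/2 + 3 else 0)
  + (if 1 = i ∧ 5 = j then (p - 9)/2 + 3 else 0)
  + (if 2 = i ∧ 5 = j then (p - 9)/2 + 4 else 0)
  + (if i % 2 = 0 ∧ 2 ≤ i ∧ i ≤ p - 3 ∧ j = 2*i+3 then (p - i - 3)/2 + 1 else 0)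
  + (if (i-1) % 2 = 0 ∧ 2 ≤ i-1 ∧ i-1 ≤ p - 3 ∧ j = 2*i+1 then (p - (i-1) - 3)/2 else 0)
  + (if (i-1) % 2 = 0 ∧ 2 ≤ i-1 ∧ i-1 ≤ p - 3 ∧ j = 2*i+3 then (p - (i-1) - 3)/2 + 2 else 0)
  + (if (i-2) % 2 = 0 ∧ 2 ≤ i-2 ∧ i-2 ≤ p - 3 ∧ j = 2*i+1 then (p - (i-2) - 3)/2 + 1 else 0)
  + (if p = i ∧ 2*p + 3 = j then 1 else 0) := by
  unfold Kh mono
  simp only [LP_add_apply, Finset.sum_add_distrib]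
  rw [collapse (7-p) (-2) (i+2) (j = 2*i+3) (fun n => (n-2, 2*n-1)) (fun n => (p+n-5)/2+1) (i,j)
        (by intro n; simp only [Prod.mk.injEq]; omega),
      collapse (7-p) (-2) (i+1) (j = 2*i+1) (fun n => (n-1, 2*n-1)) (fun n => (p+n-5)/2+2) (i,j)
        (by intro n; simp only [Prod.mk.injEq]; omega),
      collapse (7-p) (-2) (i+1) (j = 2*i+3) (fun n => (n-1, 2*n+1)) (fun n => (p+n-5)/2) (i,j)
        (by intro n; simp only [Prod.mk.injEq]; omega),
      collapse (7-p) (-2) i (j = 2*i+1) (fun n => (n, 2*n+1)) (fun n => (p+n-5)/2+1) (i,j)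
        (by intro n; simp only [Prod.mk.injEq]; omega),
      collapse 2 (p-3) i (j = 2*i+3) (fun m => (m, 2*m+3)) (fun m => (p-m-3)/2+1) (i,j)
        (by intro n; simp only [Prod.mk.injEq]; omega),
      collapse 2 (p-3) (i-1) (j = 2*i+1) (fun m => (m+1, 2*m+3)) (fun m => (p-m-3)/2) (i,j)
        (by intro n; simp only [Prod.mk.injEq]; omega),
      collapse 2 (p-3) (i-1) (j = 2*i+3) (fun m => (m+1, 2*m+5)) (fun m => (p-m-3)/2+2) (i,j)
        (by intro n; simp only [Prod.mk.injEq]; omega),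
      collapse 2 (p-3) (i-2) (j = 2*i+1) (fun m => (m+2, 2*m+5)) (fun m => (p-m-3)/2+1) (i,j)
        (by intro n; simp only [Prod.mk.injEq]; omega)]
  simp only [LP_single_apply, Prod.mk.injEq]
  ring

set_option maxHeartbeats 2000000 in
/-- For odd `p ≥ 9`, writing `c(i,j)` for the coefficient of `q^j t^i` in `Kh_p`:
`c(i, 2i+1) = c(i+1, 2i+5)` for `i ∉ {-1, 0}`, `c(0,1) - 1 = c(1,5)`, and
`c(-1,-1) = c(0,3) - 1`. -/
theorem stmt_8 (p : ℤ) (hp : Odd p) (hp9 : 9 ≤ p) :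
    (∀ i : ℤ, i ≠ -1 → i ≠ 0 → (Kh p).coeff (i, 2*i + 1) = (Kh p).coeff (i + 1, 2*i + 5)) ∧
    (Kh p).coeff (0, 1) - 1 = (Kh p).coeff (1, 5) ∧
    (Kh p).coeff (-1, -1) = (Kh p).coeff (0, 3) - 1 := by
  have hp2 : p % 2 = 1 := Int.odd_iff.mp hp
  refine ⟨fun i h1 h0 => ?_, ?_, ?_⟩
  · rw [Kh_apply, Kh_apply]
    have H : (i % 2 = 0 ∧ (i ≤ 3-p ∨ i = 5-p ∨ (7-p ≤ i ∧ i ≤ -4) ∨ i = -2 ∨ i = 2 ∨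
                (4 ≤ i ∧ i ≤ p-3) ∨ i = p-1 ∨ p+1 ≤ i)) ∨
             (i % 2 = 1 ∧ (i ≤ -p ∨ i = 2-p ∨ i = 4-p ∨ (6-p ≤ i ∧ i ≤ -5) ∨ i = -3 ∨
                i = 1 ∨ (3 ≤ i ∧ i ≤ p-4) ∨ i = p-2 ∨ p ≤ i)) := by omega
    rcases H with ⟨he, h | h | h | h | h | h | h | h⟩ | ⟨he, h | h | h | h | h | h | h | h | h⟩ <;>
      simp (disch := omega) only [if_pos, if_neg, and_self, ite_true, true_and, and_true] <;> omega
  · rw [Kh_apply p 0 1, Kh_apply p 1 5]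
    simp (disch := omega) only [if_pos, if_neg, and_self, ite_true, true_and, and_true]
    omega
  · rw [Kh_apply p (-1) (-1), Kh_apply p 0 3]
    simp (disch := omega) only [if_pos, if_neg, and_self, ite_true, true_and, and_true]
    omega
end

section
/- For every odd integer p ≥ 9 and every even integer r ≥ 2, every monomial q^j t^i appearing with nonzero coefficient in Kh_{p,r}(q,t) satisfies j - 2i ∈ {1, 3}. -/
open Finset

def PP (f : LP) : Prop := ∀ i j : ℤ, f.coeff (i, j) ≠ 0 → j - 2*i = 1 ∨ j - 2*i = 3

lemma PP_add {f g : LP} (hf : PP f) (hg : PP g) : PP (f + g) := by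
  intro i j h
  rw [AddMonoidAlgebra.coeff_add, Finsupp.add_apply] at h
  by_cases h1 : f.coeff (i, j) = 0
  · exact hg i j (by simpa [h1] using h)
  · exact hf i j h1

lemma PP_sum {α : Type*} {s : Finset α} {g : α → LP} (h : ∀ x ∈ s, PP (g x)) :
    PP (∑ x ∈ s, g x) := by
  intro i j hne
  rw [AddMonoidAlgebra.coeff_sum, Finsupp.finset_sum_apply] at hne
  obtain ⟨x, hx, hx0⟩ := Finset.exists_ne_zero_of_sum_ne_zero hne
  exact h x hx i j hx0

lemma PP_mono {i j : ℤ} (c : ℤ) (h : j - 2*i = 1 ∨ j - 2*i = 3) : PP (mono i j c) := by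
  intro i' j' hne
  rw [mono, AddMonoidAlgebra.coeff_single, Finsupp.single_apply] at hne
  split at hne
  · rename_i heq
    obtain ⟨h1, h2⟩ := Prod.mk.injEq .. ▸ heq
    subst h1; subst h2; exact h
  · exact absurd rfl hne

lemma PP_shift (r : ℤ) {f : LP} (hf : PP f) : PP (mono r (2*r) 1 * f) := by
  intro i j h
  rw [mono, AddMonoidAlgebra.coeff_single_mul_apply, one_mul] at h
  have := hf (-r + i) (-(2*r) + j) (by simpa using h)
  omega

/-- For odd `p ≥ 9` and even `r ≥ 2`, every monomial `q^j t^i` of `Kh_{p,r}` satisfies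
`j - 2i ∈ {1, 3}`. -/
theorem stmt_10 (p r : ℤ) (hp : Odd p) (hp9 : 9 ≤ p) (hr : Even r) (hr2 : 2 ≤ r) :
    ∀ i j : ℤ, (KhR p r).coeff (i, j) ≠ 0 → j - 2*i = 1 ∨ j - 2*i = 3 := by
  show PP (KhR p r)
  have hKh : PP (Kh p) := by
    unfold Kh
    repeat' apply PP_add
    all_goals (try apply PP_sum; intro n hn; repeat' apply PP_add)
    all_goals exact PP_mono _ (by omega)
  unfold KhR
  repeat' apply PP_add
  all_goals first
    | exact PP_shift r hKh
    | exact PP_mono _ (by omega)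
    | (apply PP_sum; intro k hk; repeat' apply PP_add
       all_goals exact PP_mono _ (by omega))
end

section
/- For every odd integer p ≥ 9 and every even integer r ≥ 2, Kh_{p,r}(1,1) = p(p-2) + 2r + 1. -/
open Finset

noncomputable def E' : LP →+* ℤ :=
  AddMonoidAlgebra.liftNCRingHom (RingHom.id ℤ) 1 (fun _ _ => Commute.all _ _)

lemma E'_eq (f : LP) : E' f = evalOneOne f := by
  rw [evalOneOne]
  show AddMonoidAlgebra.liftNC _ _ f = _
  rw [AddMonoidAlgebra.liftNC]
  exact (Finsupp.liftAddHom_apply _ _).trans (Finsupp.sum_congr fun x _ => by simp)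

lemma E'_mono (i j c : ℤ) : E' (mono i j c) = c := by
  simp [E', AddMonoidAlgebra.liftNCRingHom, mono, AddMonoidAlgebra.liftNC_single]

lemma gauss (A B : ℤ) (h : A - 1 ≤ B) :
    2 * (∑ j ∈ Icc A B, j) = (B - A + 1) * (A + B) := by
  rcases eq_or_lt_of_le h with heq | hlt
  · rw [Finset.Icc_eq_empty (by omega), Finset.sum_empty]
    have : B - A + 1 = 0 := by omega
    rw [this]; ring
  have himg : Icc A B = (range (B - A + 1).toNat).image (fun i : ℕ => A + i) := by
    ext x
    simp only [mem_Icc, mem_image, mem_range]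
    constructor
    · intro h'; exact ⟨(x - A).toNat, by omega, by omega⟩
    · rintro ⟨i, hi, rfl⟩; omega
  have hinj : ∀ x ∈ range (B - A + 1).toNat, ∀ y ∈ range (B - A + 1).toNat,
      A + (x : ℤ) = A + (y : ℤ) → x = y := by
    intro a _ b _ hab; omega
  rw [himg, Finset.sum_image hinj, Finset.sum_add_distrib,
    Finset.sum_const, nsmul_eq_mul]
  have hc : ((B - A + 1).toNat : ℤ) = B - A + 1 :=
    Int.toNat_of_nonneg (show (0:ℤ) ≤ B - A + 1 by omega)
  have h2 : ((B - A + 1).toNat - 1 : ℕ) = (B - A).toNat := by omega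
  have h3 : ((B - A).toNat : ℤ) = B - A :=
    Int.toNat_of_nonneg (show (0:ℤ) ≤ B - A by omega)
  have hS := Finset.sum_range_id_mul_two (B - A + 1).toNat
  rw [h2] at hS
  have hS' := congrArg (Nat.cast : ℕ → ℤ) hS
  push_cast at hS'
  rw [hc, h3] at hS'
  rw [Finset.card_range, hc]
  linarith [hS']

lemma card_Icc_int (A B : ℤ) (h : A - 1 ≤ B) : ((Icc A B).card : ℤ) = B - A + 1 := by
  rw [Int.card_Icc]; omega

lemma lin_sum (A B c d : ℤ) (h : A - 1 ≤ B) :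
    2 * ∑ j ∈ Icc A B, (c + d * j) = (B - A + 1) * (2*c + d*(A + B)) := by
  rw [Finset.sum_add_distrib, Finset.sum_const, ← Finset.mul_sum, nsmul_eq_mul,
    card_Icc_int A B h]
  linear_combination d * gauss A B h

lemma filter_even_eq (a b : ℤ) (ha : Even a) :
    (Icc a b).filter (fun n => Even n) = (Icc (a/2) (b/2)).image (fun j => 2*j) := by
  have ha' := Int.even_iff.mp ha
  ext n
  simp only [mem_filter, mem_image, mem_Icc, Int.even_iff]
  constructor
  · rintro ⟨⟨h1, h2⟩, h3⟩; exact ⟨n/2, ⟨by omega, by omega⟩, by omega⟩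
  · rintro ⟨j, ⟨h1, h2⟩, h3⟩; omega

lemma sum_filter_even (a b : ℤ) (ha : Even a) (f : ℤ → ℤ) :
    ∑ n ∈ (Icc a b).filter (fun n => Even n), f n = ∑ j ∈ Icc (a/2) (b/2), f (2*j) := by
  rw [filter_even_eq a b ha, Finset.sum_image (fun i _ j _ h => by omega)]

lemma evalKh (p : ℤ) (hp : Odd p) (hp9 : 9 ≤ p) : E' (Kh p) = p * (p - 2) + 1 := by
  obtain ⟨s, hs⟩ := hp
  rw [Kh]
  simp only [map_add, map_sum, E'_mono]
  rw [sum_filter_even (7 - p) (-2) (by rw [hs]; exact ⟨3 - s, by ring⟩),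
    sum_filter_even 2 (p - 3) ⟨1, by ring⟩]
  have k1 : ∑ j ∈ Icc ((7 - p) / 2) ((-2 : ℤ) / 2),
      ((p + 2 * j - 5) / 2 + 1 + ((p + 2 * j - 5) / 2 + 2) + (p + 2 * j - 5) / 2 +
        ((p + 2 * j - 5) / 2 + 1)) = 2 * (s * s) - 6 * s := by
    have hA : (7 - p) / 2 = 3 - s := by omega
    have hB : ((-2 : ℤ) / 2) = -1 := by norm_num
    rw [hA, hB]
    have hterm : ∀ j ∈ Icc (3 - s) (-1 : ℤ),
        ((p + 2 * j - 5) / 2 + 1 + ((p + 2 * j - 5) / 2 + 2) + (p + 2 * j - 5) / 2 +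
          ((p + 2 * j - 5) / 2 + 1)) = (2 * p - 6) + 4 * j := fun j _ => by omega
    rw [Finset.sum_congr rfl hterm]
    have h2 := lin_sum (3 - s) (-1) (2 * p - 6) 4 (by omega)
    subst hs
    ring_nf at h2 ⊢
    linarith
  have k2 : ∑ j ∈ Icc ((2 : ℤ) / 2) ((p - 3) / 2),
      ((p - 2 * j - 3) / 2 + 1 + (p - 2 * j - 3) / 2 + ((p - 2 * j - 3) / 2 + 2) +
        ((p - 2 * j - 3) / 2 + 1)) = 2 * (s * s) - 2 * s := by
    have hA : ((2 : ℤ) / 2) = 1 := by norm_num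
    have hB : (p - 3) / 2 = s - 1 := by omega
    rw [hA, hB]
    have hterm : ∀ j ∈ Icc (1 : ℤ) (s - 1),
        ((p - 2 * j - 3) / 2 + 1 + (p - 2 * j - 3) / 2 + ((p - 2 * j - 3) / 2 + 2) +
          ((p - 2 * j - 3) / 2 + 1)) = (2 * p - 2) + (-4) * j := fun j _ => by omega
    rw [Finset.sum_congr rfl hterm]
    have h2 := lin_sum 1 (s - 1) (2 * p - 2) (-4) (by omega)
    subst hs
    ring_nf at h2 ⊢
    linarith
  rw [k1, k2]
  have h9 : (p - 9) / 2 = s - 4 := by omega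
  rw [h9]
  subst hs
  ring


/-- For odd `p ≥ 9` and even `r ≥ 2`, `Kh_{p,r}(1,1) = p(p-2) + 2r + 1`. -/
theorem stmt_11 (p r : ℤ) (hp : Odd p) (hp9 : 9 ≤ p) (hr : Even r) (hr2 : 2 ≤ r) :
    evalOneOne (KhR p r) = p * (p - 2) + 2*r + 1 := by
  rw [← E'_eq, KhR]
  simp only [map_add, map_mul, map_sum, E'_mono]
  rw [evalKh p hp hp9, Finset.sum_const, nsmul_eq_mul]
  have hcard : ((Icc (1 : ℤ) (r / 2 - 1)).card : ℤ) * (1 + 1 + 1 + 1) = 2 * r - 4 := by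
    rw [Int.card_Icc]
    have := Int.even_iff.mp hr
    omega
  rw [hcard]
  ring
end
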